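/- Let R be a tangible supertropical semiring (e·𝒯(R) = 𝒢(R)) with 𝒢(R) a cancellative monoid under multiplication, V a free R-module with base (ε_i)_{i∈I}, I = {1,…,n}, and (q,b) a quadratic pair on V. Suppose y, z ∈ V are g-anisotropic and q-minimal, that y ∨ z has full support I, that e·b(y,z) < e·q(y) = e·q(z), and that either (n = 3, |supp(y)| = 1, |supp(z)| = 2) or (n = 4, |supp(y)| = |supp(z)| = 2). Then x := y ∨ z is q-minimal. -/

import Mathlib

open scoped Classical

namespace Supertrop

section Defs

variable (R : Type*) [CommSemiring R]

/-- The distinguished element `e = 1 + 1` of a semiring. -/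
def eps : R := 1 + 1

/-- `R` is a supertropical semiring: `e` is additively idempotent, and the two
supertropical addition axioms hold. -/
def IsSupertropical : Prop :=
  eps R + eps R = eps R ∧
    (∀ x y : R, eps R * x ≠ eps R * y → x + y = x ∨ x + y = y) ∧
    (∀ x y : R, eps R * x = eps R * y → x + y = eps R * y)

/-- The ghost ideal `eR`, as a subset of `R`. -/
def eSet : Set R := Set.range (fun a : R => eps R * a)

/-- The tangible elements `𝒯(R) = R \ eR`. -/
def tangible : Set R := {x : R | x ∉ eSet R}

/-- The nonzero ghost elements `𝒢(R) = eR \ {0}`. -/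
def ghost : Set R := eSet R \ {0}

end Defs

section Orders

variable {R : Type*} [CommSemiring R]

/-- The minimal ordering on an additive monoid: `x ≤ y` iff `∃ z, x + z = y`. -/
def mle {M : Type*} [AddCommMonoid M] (x y : M) : Prop := ∃ z, x + z = y

/-- Strict minimal ordering. -/
def mlt {M : Type*} [AddCommMonoid M] (x y : M) : Prop := mle x y ∧ x ≠ y

/-- The (total) ordering of the bipotent semiring `eR`: `u ≤ v ⟺ u + v = v`. -/
def gle (u v : R) : Prop := u + v = v

/-- The strict ordering of `eR`. -/
def glt (u v : R) : Prop := gle u v ∧ u ≠ v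

end Orders

section SSF

variable (R : Type*) [CommSemiring R]

/-- `R` is a supersemifield: supertropical, every tangible element is invertible in `R`,
and `𝒢(R)` is a group under multiplication with identity `e`. -/
def IsSupersemifield : Prop :=
  IsSupertropical R ∧
    (∀ t ∈ tangible R, IsUnit t) ∧
    eps R ∈ ghost R ∧
    (∀ g ∈ ghost R, ∀ h ∈ ghost R, g * h ∈ ghost R) ∧
    (∀ g ∈ ghost R, ∃ h ∈ ghost R, g * h = eps R)

/-- The supersemifield `R` is tangible: `e·𝒯(R) = 𝒢(R)`. -/
def TangibleSSF : Prop := (fun t => eps R * t) '' tangible R = ghost R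

/-- Nontriviality: `𝒢(R) ≠ {e}`. -/
def NontrivialG : Prop := ghost R ≠ {eps R}

/-- `R` is discrete: `𝒢(R)` has a smallest element `> e`. -/
def DiscreteR : Prop :=
  ∃ c ∈ ghost R, glt (eps R) c ∧ ∀ d ∈ ghost R, glt (eps R) d → gle c d

/-- `R` is dense: `𝒢(R)` has no smallest element `> e`. -/
def DenseR : Prop := ¬ DiscreteR R

/-- `eR` is a semifield: `e ≠ 0`, `𝒢(R)` is closed under multiplication, and every
element of `𝒢(R)` is invertible in `eR` with respect to the identity `e`. -/
def GhostSemifield : Prop :=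
  eps R ∈ ghost R ∧
    (∀ g ∈ ghost R, ∀ h ∈ ghost R, g * h ∈ ghost R) ∧
    (∀ g ∈ ghost R, ∃ h ∈ ghost R, g * h = eps R)

end SSF

section Quad

variable {R : Type*} [CommSemiring R] {V : Type*} [AddCommMonoid V] [Module R V]

/-- `b` is a (symmetric bilinear) companion of the quadratic form `q`. -/
def IsCompanion (q : V → R) (b : V → V → R) : Prop :=
  (∀ x y, b x y = b y x) ∧
    (∀ x y z, b (x + y) z = b x z + b y z) ∧
    (∀ (a : R) (x y : V), b (a • x) y = a * b x y) ∧
    (∀ x y, q (x + y) = q x + q y + b x y)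

/-- `(q, b)` is a quadratic pair on `V`. -/
def IsQuadPair (q : V → R) (b : V → V → R) : Prop :=
  (∀ (a : R) (x : V), q (a • x) = a ^ 2 * q x) ∧ IsCompanion q b

/-- `q` is a quadratic form on `V`. -/
def IsQuadForm (q : V → R) : Prop := ∃ b, IsQuadPair q b

/-- `q` is quasilinear (i.e. additive) on the submodule `W`. -/
def QuasilinearOn (q : V → R) (W : Submodule R V) : Prop :=
  ∀ u ∈ W, ∀ v ∈ W, q (u + v) = q u + q v

/-- `x` is `q`-minimal: `q x' < q x` for every `x' < x` (in the minimal orderings). -/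
def QMinimal (q : V → R) (x : V) : Prop := ∀ x' : V, mlt x' x → mlt (q x') (q x)

/-- The maximum of two elements of `R` with respect to the minimal ordering. -/
noncomputable def rsup (a b : R) : R := if a = b then a else a + b

/-- The componentwise maximum `x ∨ y` (in the minimal ordering) of two vectors
of a free module. -/
noncomputable def vsup {ι : Type*} (bV : Module.Basis ι R V) (x y : V) : V :=
  bV.repr.symm (Finsupp.zipWith rsup (by simp [rsup]) (bV.repr x) (bV.repr y))

/-- The restriction `x(J)` of a vector to a subset `J` of the index set of the base. -/
noncomputable def restrict {ι : Type*} (bV : Module.Basis ι R V) (x : V) (J : Finset ι) : V :=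
  ∑ i ∈ J, (bV.repr x) i • bV i

/-- The CS-ratio `CS(x,y) = e·b(x,y)² · (e·q(x)·q(y))⁻¹`, where `inv` is the
inversion of the semifield `eR`. -/
noncomputable def CSratio (q : V → R) (b : V → V → R) (inv : R → R) (x y : V) : R :=
  eps R * (b x y) ^ 2 * inv (eps R * (q x * q y))

end Quad

section Aux

variable {R : Type*} [CommSemiring R]

theorem eps_mul_eps (hR : IsSupertropical R) : eps R * eps R = eps R := by
  have h : eps R * eps R = eps R + eps R := by rw [eps]; ring
  rw [h, hR.1]

theorem eps_mul_idem (hR : IsSupertropical R) (a : R) :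
    eps R * (eps R * a) = eps R * a := by rw [← mul_assoc, eps_mul_eps hR]

theorem eps_mul_add_self (hR : IsSupertropical R) (a : R) :
    eps R * a + eps R * a = eps R * a := by rw [← add_mul, hR.1]

theorem mem_eSet_iff (hR : IsSupertropical R) {u : R} : u ∈ eSet R ↔ eps R * u = u := by
  constructor
  · rintro ⟨a, rfl⟩; exact eps_mul_idem hR a
  · intro h; exact ⟨u, h⟩

theorem eps_mul_mem_eSet (a : R) : eps R * a ∈ eSet R := ⟨a, rfl⟩

theorem eSet_mul_left {u : R} (hu : u ∈ eSet R) (v : R) : u * v ∈ eSet R := by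
  obtain ⟨a, rfl⟩ := hu; exact ⟨a * v, by ring⟩

theorem eSet_mul_right {u : R} (hu : u ∈ eSet R) (v : R) : v * u ∈ eSet R := by
  rw [mul_comm]; exact eSet_mul_left hu v

/-- `E` is multiplicative: `(E s)(E t) = E (s t)`. -/
theorem eps_mul_mul (hR : IsSupertropical R) (s t : R) :
    (eps R * s) * (eps R * t) = eps R * (s * t) := by
  have h : (eps R * s) * (eps R * t) = (eps R * eps R) * (s * t) := by ring
  rw [h, eps_mul_eps hR]

theorem eps_mul_tangible_mem_ghost (htan : TangibleSSF R) {t : R} (ht : t ∈ tangible R) :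
    eps R * t ∈ ghost R := by
  rw [← htan]; exact ⟨t, ht, rfl⟩

theorem ghost_ne_zero {g : R} (hg : g ∈ ghost R) : g ≠ 0 := by
  intro h; exact hg.2 (by simp [h])

theorem mem_ghost_of_ne_zero {g : R} (hg : g ∈ eSet R) (h : g ≠ 0) : g ∈ ghost R :=
  ⟨hg, by simpa using h⟩

/-- Zerosumfreeness. -/
theorem add_eq_zero_left (hR : IsSupertropical R) (htan : TangibleSSF R)
    {a c : R} (h : a + c = 0) : a = 0 := by
  by_cases hE : eps R * a = eps R * c
  · have h2 : a + c = eps R * c := hR.2.2 a c hE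
    have hc0 : c = 0 := by
      by_cases hct : c ∈ tangible R
      · exact absurd (h2 ▸ h) (ghost_ne_zero (eps_mul_tangible_mem_ghost htan hct))
      · have : c ∈ eSet R := not_not.mp hct
        have := (mem_eSet_iff hR).mp this
        rw [this] at h2; rw [← h2, h]
    rw [hc0, add_zero] at h; exact h
  · rcases hR.2.1 a c hE with h2 | h2
    · rw [h2] at h; exact h
    · have hc : c = 0 := by rw [← h2, h]
      rw [hc, add_zero] at h; exact h

theorem add_eq_zero_right (hR : IsSupertropical R) (htan : TangibleSSF R)
    {a c : R} (h : a + c = 0) : c = 0 :=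
  add_eq_zero_left hR htan (by rwa [add_comm])

/- order lemmas -/

theorem gle_trans {u v w : R} (h1 : gle u v) (h2 : gle v w) : gle u w := by
  unfold gle at *; rw [← h2, ← add_assoc, h1]

theorem gle_antisymm {u v : R} (h1 : gle u v) (h2 : gle v u) : u = v := by
  unfold gle at *
  rw [← h2, add_comm]
  exact h1

theorem gle_zero (u : R) : gle 0 u := zero_add u

theorem gle_add {a c u : R} (h1 : gle a u) (h2 : gle c u) : gle (a + c) u := by
  unfold gle at *; rw [add_assoc, h2, h1]

theorem gle_mul {u v : R} (w : R) (h : gle u v) : gle (u * w) (v * w) := by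
  unfold gle at *; rw [← add_mul, h]

theorem mle_refl {M : Type*} [AddCommMonoid M] (x : M) : mle x x := ⟨0, add_zero x⟩

theorem mle_gle (hR : IsSupertropical R) {a c : R} (h : mle a c) :
    gle (eps R * a) (eps R * c) := by
  obtain ⟨w, rfl⟩ := h
  show eps R * a + eps R * (a + w) = eps R * (a + w)
  rw [mul_add, ← add_assoc, eps_mul_add_self hR]

theorem eSet_add_total (hR : IsSupertropical R) {u v : R}
    (hu : u ∈ eSet R) (hv : v ∈ eSet R) : u + v = u ∨ u + v = v := by
  by_cases h : eps R * u = eps R * v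
  · right; rw [hR.2.2 u v h, (mem_eSet_iff hR).mp hv]
  · exact hR.2.1 u v h

theorem gle_glt_trans {u v w : R} (h1 : gle u v) (h2 : glt v w) : glt u w := by
  refine ⟨gle_trans h1 h2.1, ?_⟩
  rintro rfl
  exact h2.2 (gle_antisymm h2.1 h1)

theorem glt_gle_trans {u v w : R} (h1 : glt u v) (h2 : gle v w) : glt u w := by
  refine ⟨gle_trans h1.1 h2, ?_⟩
  rintro rfl
  exact h1.2 (gle_antisymm h1.1 h2)

theorem glt_add (hR : IsSupertropical R) {a c u : R} (ha : a ∈ eSet R) (hc : c ∈ eSet R)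
    (h1 : glt a u) (h2 : glt c u) : glt (a + c) u := by
  refine ⟨gle_add h1.1 h2.1, ?_⟩
  rcases eSet_add_total hR ha hc with h | h <;> rw [h]
  · exact h1.2
  · exact h2.2

theorem eSet_cancel (hmul : ∀ g ∈ ghost R, ∀ h ∈ ghost R, g * h ∈ ghost R)
    (hcanc : ∀ g ∈ ghost R, ∀ a ∈ ghost R, ∀ c ∈ ghost R, g * a = g * c → a = c)
    {g a c : R} (hg : g ∈ ghost R) (ha : a ∈ eSet R) (hc : c ∈ eSet R)
    (h : g * a = g * c) : a = c := by
  by_cases ha0 : a = 0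
  · subst ha0
    by_contra hc0
    have hcg : c ∈ ghost R := mem_ghost_of_ne_zero hc (fun h' => hc0 h'.symm)
    exact ghost_ne_zero (hmul g hg c hcg) (by rw [← h, mul_zero])
  · by_cases hc0 : c = 0
    · subst hc0
      exact absurd (by rw [h, mul_zero]) (ghost_ne_zero (hmul g hg a (mem_ghost_of_ne_zero ha ha0)))
    · exact hcanc g hg a (mem_ghost_of_ne_zero ha ha0) c (mem_ghost_of_ne_zero hc hc0) h

theorem glt_mul_ghost (hmul : ∀ g ∈ ghost R, ∀ h ∈ ghost R, g * h ∈ ghost R)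
    (hcanc : ∀ g ∈ ghost R, ∀ a ∈ ghost R, ∀ c ∈ ghost R, g * a = g * c → a = c)
    {g a c : R} (hg : g ∈ ghost R) (ha : a ∈ eSet R) (hc : c ∈ eSet R)
    (h : glt a c) : glt (g * a) (g * c) := by
  refine ⟨?_, ?_⟩
  · show g * a + g * c = g * c
    rw [← mul_add, h.1]
  · intro h'
    exact h.2 (eSet_cancel hmul hcanc hg ha hc h')

/-- Absorption: if `E s < E t` then `t + s = t`. -/
theorem absorb (hR : IsSupertropical R) {s t : R}
    (h : glt (eps R * s) (eps R * t)) : t + s = t := by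
  rcases hR.2.1 t s (fun h' => h.2 (h'.symm)) with h2 | h2
  · exact h2
  · exfalso
    apply h.2
    apply gle_antisymm h.1
    show eps R * t + eps R * s = eps R * s
    rw [← mul_add, h2]

/-- If `a < c` in the minimal order and `c` is tangible, then `E a ≠ E c`. -/
theorem tangible_mlt_ne (hR : IsSupertropical R) {a c : R} (hc : c ∉ eSet R)
    (hle : mle a c) (hne : a ≠ c) : eps R * a ≠ eps R * c := by
  intro hE
  obtain ⟨w, hw⟩ := hle
  by_cases h2 : eps R * a = eps R * w
  · apply hc
    rw [← hw, hR.2.2 a w h2]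
    exact eps_mul_mem_eSet w
  · rcases hR.2.1 a w h2 with h3 | h3
    · rw [h3] at hw; exact hne hw
    · rw [h3] at hw; subst hw; exact h2 hE

theorem tangible_mlt_glt (hR : IsSupertropical R) {a c : R} (hc : c ∉ eSet R)
    (hle : mle a c) (hne : a ≠ c) : glt (eps R * a) (eps R * c) :=
  ⟨mle_gle hR hle, tangible_mlt_ne hR hc hle hne⟩

/-- Key multiplicative bound: if `a₁ ≤ c₁` strictly (with `c₁` tangible), `a₂ ≤ c₂`
(`c₂, t` tangible) then `E (a₁ a₂ t) < E (c₁ c₂ t)`. -/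
theorem key_mul (hR : IsSupertropical R) (htan : TangibleSSF R)
    (hmul : ∀ g ∈ ghost R, ∀ h ∈ ghost R, g * h ∈ ghost R)
    (hcanc : ∀ g ∈ ghost R, ∀ a ∈ ghost R, ∀ c ∈ ghost R, g * a = g * c → a = c)
    {a₁ c₁ a₂ c₂ t : R} (hc₁ : c₁ ∈ tangible R) (hc₂ : c₂ ∈ tangible R)
    (ht : t ∈ tangible R) (h1 : mle a₁ c₁) (h1n : a₁ ≠ c₁) (h2 : mle a₂ c₂) :
    glt (eps R * (a₁ * a₂ * t)) (eps R * (c₁ * c₂ * t)) := by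
  have hg : (eps R * c₂) * (eps R * t) ∈ ghost R :=
    hmul _ (eps_mul_tangible_mem_ghost htan hc₂) _ (eps_mul_tangible_mem_ghost htan ht)
  have hstrict : glt (eps R * a₁) (eps R * c₁) := tangible_mlt_glt hR hc₁ h1 h1n
  have step2 : glt ((eps R * c₂ * (eps R * t)) * (eps R * a₁))
      ((eps R * c₂ * (eps R * t)) * (eps R * c₁)) := by
    rw [mul_comm _ (eps R * a₁), mul_comm _ (eps R * c₁)]
    have := glt_mul_ghost hmul hcanc hg (eps_mul_mem_eSet a₁) (eps_mul_mem_eSet c₁) hstrict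
    rwa [mul_comm (eps R * c₂ * (eps R * t)) _, mul_comm (eps R * c₂ * (eps R * t)) _] at this
  have step1 : gle ((eps R * a₂) * ((eps R * a₁) * (eps R * t)))
      ((eps R * c₂) * ((eps R * a₁) * (eps R * t))) := gle_mul _ (mle_gle hR h2)
  have step2 := glt_mul_ghost hmul hcanc hg (eps_mul_mem_eSet a₁) (eps_mul_mem_eSet c₁) hstrict
  rw [show (eps R * c₂) * ((eps R * a₁) * (eps R * t))
      = eps R * c₂ * (eps R * t) * (eps R * a₁) from by ring] at step1
  have comb := gle_glt_trans step1 step2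
  rw [show (eps R * a₂) * ((eps R * a₁) * (eps R * t)) = eps R * (a₁ * a₂ * t) from by
        rw [eps_mul_mul hR, eps_mul_mul hR]; ring,
      show eps R * c₂ * (eps R * t) * (eps R * c₁) = eps R * (c₁ * c₂ * t) from by
        rw [eps_mul_mul hR, eps_mul_mul hR]; ring] at comb
  exact comb

/-- Key square bound (weak): `a ≤ c` gives `mle (a² t) (c² t)`. -/
theorem mle_sq_mul {a c t : R} (h : mle a c) : mle (a ^ 2 * t) (c ^ 2 * t) := by
  obtain ⟨w, rfl⟩ := h
  exact ⟨(a * w + w * a + w * w) * t, by ring⟩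

end Aux

section Mod

variable {R : Type*} [CommSemiring R] {V : Type*} [AddCommMonoid V] [Module R V]
variable {q : V → R} {b : V → V → R}

theorem q_add (hqb : IsQuadPair q b) (u v : V) : q (u + v) = q u + q v + b u v :=
  hqb.2.2.2.2 u v

theorem b_add_right (hqb : IsQuadPair q b) (x u v : V) : b x (u + v) = b x u + b x v := by
  rw [hqb.2.1, hqb.2.2.1, hqb.2.1 u x, hqb.2.1 v x]

theorem b_smul_right (hqb : IsQuadPair q b) (a : R) (x v : V) : b x (a • v) = a * b x v := by
  rw [hqb.2.1, hqb.2.2.2.1, hqb.2.1]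

theorem mle_q (hqb : IsQuadPair q b) {u v : V} (h : mle u v) : mle (q u) (q v) := by
  obtain ⟨w, rfl⟩ := h
  exact ⟨q w + b u w, by rw [q_add hqb]; ring⟩

theorem mle_b (hqb : IsQuadPair q b) {u u' v v' : V} (h1 : mle u u') (h2 : mle v v') :
    mle (b u v) (b u' v') := by
  obtain ⟨w, rfl⟩ := h1
  obtain ⟨w', rfl⟩ := h2
  refine ⟨b u w' + b w v + b w w', ?_⟩
  rw [hqb.2.2.1, b_add_right hqb, b_add_right hqb]
  ring

variable {ι : Type*}

theorem mle_repr (bV : Module.Basis ι R V) {x' x : V} (h : mle x' x) (i : ι) :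
    mle (bV.repr x' i) (bV.repr x i) := by
  obtain ⟨w, rfl⟩ := h
  exact ⟨bV.repr w i, by rw [map_add, Finsupp.add_apply]⟩

theorem mle_repr_eq_zero (hR : IsSupertropical R) (htan : TangibleSSF R)
    (bV : Module.Basis ι R V) {x' x : V} (h : mle x' x) {i : ι} (hx : bV.repr x i = 0) :
    bV.repr x' i = 0 := by
  obtain ⟨c, hc⟩ := mle_repr bV h i
  rw [hx] at hc
  exact add_eq_zero_left hR htan hc

theorem eq_single_smul (bV : Module.Basis ι R V) {v : V} {i : ι}
    (h : ∀ k, k ≠ i → bV.repr v k = 0) : v = bV.repr v i • bV i := by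
  apply bV.repr.injective
  rw [map_smul, Module.Basis.repr_self]
  ext k
  by_cases hk : k = i
  · subst hk
    simp
  · simp [h k hk, Finsupp.single_apply, Ne.symm hk]

theorem eq_two_smul (bV : Module.Basis ι R V) {v : V} {i j : ι} (hij : i ≠ j)
    (h : ∀ k, k ≠ i → k ≠ j → bV.repr v k = 0) :
    v = bV.repr v i • bV i + bV.repr v j • bV j := by
  apply bV.repr.injective
  rw [map_add, map_smul, map_smul, Module.Basis.repr_self, Module.Basis.repr_self]
  ext k
  by_cases hk : k = i
  · subst hk
    simp [Finsupp.single_apply, Ne.symm hij]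
  · by_cases hk2 : k = j
    · subst hk2
      simp [Finsupp.single_apply, hij]
    · simp [h k hk hk2, Finsupp.single_apply, Ne.symm hk, Ne.symm hk2]

/-- Decomposition of a tangible three-term sum: auxiliary two-term version. -/
theorem tri2 (hR : IsSupertropical R) {A C s : R} (hs : s = A + C) (hts : s ∉ eSet R)
    (hA : A ≠ s) : s = C ∧ glt (eps R * A) (eps R * C) := by
  by_cases hE2 : eps R * A = eps R * C
  · exact absurd (by rw [hs, hR.2.2 _ _ hE2]; exact eps_mul_mem_eSet C) hts
  · rcases hR.2.1 A C hE2 with h3 | h3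
    · exact absurd (hs.trans h3).symm hA
    · refine ⟨hs.trans h3, ?_, hE2⟩
      show eps R * A + eps R * C = eps R * C
      rw [← mul_add, h3]

theorem eps_gle_of_add {u v : R} (h : u + v = v) : gle (eps R * u) (eps R * v) := by
  show eps R * u + eps R * v = eps R * v
  rw [← mul_add, h]

/-- Decomposition of a tangible three-term sum. -/
theorem tri (hR : IsSupertropical R) {A B C s : R} (hs : s = A + B + C) (hts : s ∉ eSet R)
    (hA : A ≠ s) (hB : B ≠ s) :
    s = C ∧ glt (eps R * A) (eps R * C) ∧ glt (eps R * B) (eps R * C) := by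
  by_cases hE : eps R * A = eps R * B
  · have hs2 : s = eps R * B + C := by rw [hs, hR.2.2 A B hE]
    have hEB : eps R * B ≠ s := fun h => hts (h ▸ eps_mul_mem_eSet B)
    obtain ⟨hsC, hg⟩ := tri2 hR hs2 hts hEB
    rw [eps_mul_idem hR] at hg
    refine ⟨hsC, ?_, hg⟩
    rw [hE]
    exact hg
  · rcases hR.2.1 A B hE with h2 | h2
    · have hs2 : s = A + C := by rw [hs, h2]
      obtain ⟨hsC, hg⟩ := tri2 hR hs2 hts hA
      have hBA : gle (eps R * B) (eps R * A) := eps_gle_of_add (by rwa [add_comm] at h2)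
      exact ⟨hsC, hg, gle_glt_trans hBA hg⟩
    · have hs2 : s = B + C := by rw [hs, h2]
      obtain ⟨hsC, hg⟩ := tri2 hR hs2 hts hB
      have hAB : gle (eps R * A) (eps R * B) := eps_gle_of_add h2
      exact ⟨hsC, gle_glt_trans hAB hg, hg⟩

/-- Case of a vector with support in a single index. -/
theorem L1 (hR : IsSupertropical R) (htan : TangibleSSF R)
    (hmul : ∀ g ∈ ghost R, ∀ h ∈ ghost R, g * h ∈ ghost R)
    (hcanc : ∀ g ∈ ghost R, ∀ a ∈ ghost R, ∀ c ∈ ghost R, g * a = g * c → a = c)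
    (bV : Module.Basis ι R V) (hqb : IsQuadPair q b) {y : V} {i : ι}
    (hyq : q y ∈ tangible R) (hsupp : ∀ k, k ≠ i → bV.repr y k = 0) :
    ∀ y', mlt y' y → glt (eps R * q y') (eps R * q y) := by
  intro y' hy'
  obtain ⟨c, hc⟩ : ∃ c, bV.repr y i = c := ⟨_, rfl⟩
  have hy : y = c • bV i := by rw [← hc]; exact eq_single_smul bV hsupp
  have hqy : q y = c ^ 2 * q (bV i) := by rw [hy, hqb.1]
  have hqi : q (bV i) ∉ eSet R := by
    intro hmem
    exact hyq (by rw [hqy]; exact eSet_mul_right hmem _)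
  have hct : c ∉ eSet R := by
    intro hmem
    refine hyq ?_
    rw [hqy, pow_two]
    exact eSet_mul_left (eSet_mul_left hmem c) _
  have hsupp' : ∀ k, k ≠ i → bV.repr y' k = 0 := fun k hk =>
    mle_repr_eq_zero hR htan bV hy'.1 (hsupp k hk)
  obtain ⟨a, ha⟩ : ∃ a, bV.repr y' i = a := ⟨_, rfl⟩
  have hy2 : y' = a • bV i := by rw [← ha]; exact eq_single_smul bV hsupp'
  have hqy' : q y' = a ^ 2 * q (bV i) := by rw [hy2, hqb.1]
  have hma : mle a c := by rw [← ha, ← hc]; exact mle_repr bV hy'.1 i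
  have hne : a ≠ c := by
    intro h
    apply hy'.2
    rw [hy2, hy, h]
  have hkey := key_mul hR htan hmul hcanc hct hct hqi hma hne hma
  rw [hqy', hqy, pow_two, pow_two]
  exact hkey

/-- Case of a vector with support in two indices. -/
theorem L2 (hR : IsSupertropical R) (htan : TangibleSSF R)
    (hmul : ∀ g ∈ ghost R, ∀ h ∈ ghost R, g * h ∈ ghost R)
    (hcanc : ∀ g ∈ ghost R, ∀ a ∈ ghost R, ∀ c ∈ ghost R, g * a = g * c → a = c)
    (bV : Module.Basis ι R V) (hqb : IsQuadPair q b) {z : V} {i j : ι} (hij : i ≠ j)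
    (hzq : q z ∈ tangible R) (hzmin : QMinimal q z)
    (hsupp : ∀ k, k ≠ i → k ≠ j → bV.repr z k = 0)
    (hzi : bV.repr z i ≠ 0) (hzj : bV.repr z j ≠ 0) :
    ∀ z', mlt z' z → glt (eps R * q z') (eps R * q z) := by
  obtain ⟨zi, hzi0⟩ : ∃ c, bV.repr z i = c := ⟨_, rfl⟩
  obtain ⟨zj, hzj0⟩ : ∃ c, bV.repr z j = c := ⟨_, rfl⟩
  rw [hzi0] at hzi
  rw [hzj0] at hzj
  have hz : z = zi • bV i + zj • bV j := by
    rw [← hzi0, ← hzj0]; exact eq_two_smul bV hij hsupp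
  have hqz : q z = zi ^ 2 * q (bV i) + zj ^ 2 * q (bV j) + zi * zj * b (bV i) (bV j) := by
    rw [hz, q_add hqb, hqb.1, hqb.1, hqb.2.2.2.1, b_smul_right hqb, ← mul_assoc]
  have hAz : zi ^ 2 * q (bV i) ≠ q z := by
    have hlt : mlt (zi • bV i) z := by
      refine ⟨⟨zj • bV j, hz.symm⟩, ?_⟩
      intro h
      apply hzj
      have h4 := congrArg (fun v => bV.repr v j) h
      simp only [map_smul, Module.Basis.repr_self, Finsupp.smul_apply, Finsupp.single_apply,
        if_neg hij, smul_eq_mul, mul_zero] at h4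
      rw [hzj0] at h4
      exact h4.symm
    have h2 := (hzmin _ hlt).2
    rwa [hqb.1] at h2
  have hBz : zj ^ 2 * q (bV j) ≠ q z := by
    have hlt : mlt (zj • bV j) z := by
      refine ⟨⟨zi • bV i, by rw [add_comm]; exact hz.symm⟩, ?_⟩
      intro h
      apply hzi
      have h4 := congrArg (fun v => bV.repr v i) h
      simp only [map_smul, Module.Basis.repr_self, Finsupp.smul_apply, Finsupp.single_apply,
        if_neg (Ne.symm hij), smul_eq_mul, mul_zero] at h4
      rw [hzi0] at h4
      exact h4.symm
    have h2 := (hzmin _ hlt).2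
    rwa [hqb.1] at h2
  obtain ⟨hsC, hgA, hgB⟩ := tri hR hqz hzq hAz hBz
  have hβt : b (bV i) (bV j) ∉ eSet R := by
    intro hm
    exact hzq (by rw [hsC]; exact eSet_mul_right hm _)
  have hzit : zi ∉ eSet R := by
    intro hm
    exact hzq (by rw [hsC]; exact eSet_mul_left (eSet_mul_left hm zj) _)
  have hzjt : zj ∉ eSet R := by
    intro hm
    exact hzq (by rw [hsC]; exact eSet_mul_left (eSet_mul_right hm zi) _)
  intro z' hz'
  have hsupp' : ∀ k, k ≠ i → k ≠ j → bV.repr z' k = 0 := fun k h1 h2 =>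
    mle_repr_eq_zero hR htan bV hz'.1 (hsupp k h1 h2)
  obtain ⟨ai, hai⟩ : ∃ c, bV.repr z' i = c := ⟨_, rfl⟩
  obtain ⟨aj, haj⟩ : ∃ c, bV.repr z' j = c := ⟨_, rfl⟩
  have hz2 : z' = ai • bV i + aj • bV j := by
    rw [← hai, ← haj]; exact eq_two_smul bV hij hsupp'
  have hqz' : q z' = ai ^ 2 * q (bV i) + aj ^ 2 * q (bV j) + ai * aj * b (bV i) (bV j) := by
    rw [hz2, q_add hqb, hqb.1, hqb.1, hqb.2.2.2.1, b_smul_right hqb, ← mul_assoc]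
  have hmi : mle ai zi := by rw [← hai, ← hzi0]; exact mle_repr bV hz'.1 i
  have hmj : mle aj zj := by rw [← haj, ← hzj0]; exact mle_repr bV hz'.1 j
  have hone : ai ≠ zi ∨ aj ≠ zj := by
    by_contra h
    push_neg at h
    apply hz'.2
    rw [hz2, hz, h.1, h.2]
  have t1 : glt (eps R * (ai ^ 2 * q (bV i))) (eps R * (zi * zj * b (bV i) (bV j))) :=
    gle_glt_trans (mle_gle hR (mle_sq_mul hmi)) hgA
  have t2 : glt (eps R * (aj ^ 2 * q (bV j))) (eps R * (zi * zj * b (bV i) (bV j))) :=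
    gle_glt_trans (mle_gle hR (mle_sq_mul hmj)) hgB
  have t3 : glt (eps R * (ai * aj * b (bV i) (bV j)))
      (eps R * (zi * zj * b (bV i) (bV j))) := by
    rcases hone with h | h
    · exact key_mul hR htan hmul hcanc hzit hzjt hβt hmi h hmj
    · have hk := key_mul hR htan hmul hcanc hzjt hzit hβt hmj h hmi
      rwa [mul_comm aj ai, mul_comm zj zi] at hk
  rw [hqz', hsC, mul_add, mul_add]
  refine glt_add hR ?_ (eps_mul_mem_eSet _) (glt_add hR (eps_mul_mem_eSet _)
    (eps_mul_mem_eSet _) t1 t2) t3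
  rw [← mul_add]
  exact eps_mul_mem_eSet _

/-- Combined: a `q`-minimal `g`-anisotropic vector with support of size 1 or 2 satisfies
the strict ghost inequality for all strictly smaller vectors. -/
theorem Pgen (hR : IsSupertropical R) (htan : TangibleSSF R)
    (hmul : ∀ g ∈ ghost R, ∀ h ∈ ghost R, g * h ∈ ghost R)
    (hcanc : ∀ g ∈ ghost R, ∀ a ∈ ghost R, ∀ c ∈ ghost R, g * a = g * c → a = c)
    (bV : Module.Basis ι R V) (hqb : IsQuadPair q b) {v : V}
    (hq : q v ∈ tangible R) (hmin : QMinimal q v)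
    (hcard : (bV.repr v).support.card = 1 ∨ (bV.repr v).support.card = 2) :
    ∀ v', mlt v' v → glt (eps R * q v') (eps R * q v) := by
  rcases hcard with h | h
  · obtain ⟨i, hi⟩ := Finset.card_eq_one.mp h
    refine L1 hR htan hmul hcanc bV hqb (i := i) hq (fun k hk => ?_)
    refine Finsupp.notMem_support_iff.mp ?_
    rw [hi]
    simpa using hk
  · obtain ⟨i, j, hij, hs⟩ := Finset.card_eq_two.mp h
    refine L2 hR htan hmul hcanc bV hqb hij hq hmin (fun k h1 h2 => ?_) ?_ ?_
    · refine Finsupp.notMem_support_iff.mp ?_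
      rw [hs]
      simp [h1, h2]
    · refine Finsupp.mem_support_iff.mp ?_
      rw [hs]; simp
    · refine Finsupp.mem_support_iff.mp ?_
      rw [hs]; simp

end Mod

/-- if `y, z` are `g`-anisotropic `q`-minimal vectors whose maximum has
full support, `e·b(y,z) < e·q(y) = e·q(z)`, and the supports have the indicated sizes,
then `y ∨ z` is `q`-minimal. -/
theorem stmt18 {R : Type*} [CommSemiring R] (hR : IsSupertropical R)
    (htan : TangibleSSF R) (hid : eps R ∈ ghost R)
    (hmul : ∀ g ∈ ghost R, ∀ h ∈ ghost R, g * h ∈ ghost R)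
    (hcanc : ∀ g ∈ ghost R, ∀ a ∈ ghost R, ∀ c ∈ ghost R, g * a = g * c → a = c)
    {V : Type*} [AddCommMonoid V] [Module R V]
    (n : ℕ) (bV : Module.Basis (Fin n) R V)
    (q : V → R) (b : V → V → R) (hqb : IsQuadPair q b)
    (y z : V) (hy : y ≠ 0) (hz : z ≠ 0)
    (hyq : q y ∈ tangible R) (hzq : q z ∈ tangible R)
    (hymin : QMinimal q y) (hzmin : QMinimal q z)
    (hfull : (bV.repr (vsup bV y z)).support = Finset.univ)
    (hb : glt (eps R * b y z) (eps R * q y))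
    (hqq : eps R * q y = eps R * q z)
    (hcase : (n = 3 ∧ (bV.repr y).support.card = 1 ∧ (bV.repr z).support.card = 2) ∨
      (n = 4 ∧ (bV.repr y).support.card = 2 ∧ (bV.repr z).support.card = 2)) :
    QMinimal q (vsup bV y z) := by
  classical
  set Sy := (bV.repr y).support with hSy
  set Sz := (bV.repr z).support with hSz
  have hx_repr : bV.repr (vsup bV y z) =
      Finsupp.zipWith rsup (by simp [rsup]) (bV.repr y) (bV.repr z) := by
    rw [vsup, LinearEquiv.apply_symm_apply]
  -- the two supports cover everything and are disjoint
  have hunion : Sy ∪ Sz = Finset.univ := by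
    refine Finset.Subset.antisymm (Finset.subset_univ _) ?_
    rw [hx_repr] at hfull
    rw [← hfull]
    exact Finsupp.support_zipWith
  have hcards : Sy.card + Sz.card = n := by
    rcases hcase with ⟨hn, h1, h2⟩ | ⟨hn, h1, h2⟩ <;> omega
  have hint : Sy ∩ Sz = ∅ := by
    have h2 := Finset.card_union_add_card_inter Sy Sz
    rw [hunion, Finset.card_univ, Fintype.card_fin] at h2
    refine Finset.card_eq_zero.mp ?_
    omega
  have hdisj : ∀ k, bV.repr y k = 0 ∨ bV.repr z k = 0 := by
    intro k
    by_contra h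
    push_neg at h
    have hk : k ∈ Sy ∩ Sz :=
      Finset.mem_inter.mpr ⟨Finsupp.mem_support_iff.mpr h.1, Finsupp.mem_support_iff.mpr h.2⟩
    rw [hint] at hk
    exact absurd hk (Finset.notMem_empty k)
  have hx_add : vsup bV y z = y + z := by
    apply bV.repr.injective
    rw [hx_repr, map_add]
    ext k
    rw [Finsupp.zipWith_apply, Finsupp.add_apply]
    rcases hdisj k with h | h <;> rw [h] <;> simp [rsup] <;> split_ifs with hh <;> simp [hh]
  -- value of q at the sup
  have hqx : q (vsup bV y z) = eps R * q y := by
    rw [hx_add, q_add hqb, hR.2.2 _ _ hqq]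
    have h2 : glt (eps R * b y z) (eps R * (eps R * q z)) := by
      rw [eps_mul_idem hR, ← hqq]
      exact hb
    rw [absorb hR h2, ← hqq]
  -- the two key strict ghost bounds
  have hPy : ∀ y', mlt y' y → glt (eps R * q y') (eps R * q y) := by
    refine Pgen hR htan hmul hcanc bV hqb hyq hymin ?_
    rcases hcase with ⟨_, h1, _⟩ | ⟨_, h1, _⟩
    · exact Or.inl h1
    · exact Or.inr h1
  have hPz : ∀ z', mlt z' z → glt (eps R * q z') (eps R * q z) := by
    refine Pgen hR htan hmul hcanc bV hqb hzq hzmin ?_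
    rcases hcase with ⟨_, _, h2⟩ | ⟨_, _, h2⟩
    · exact Or.inr h2
    · exact Or.inr h2
  -- main argument
  intro x' hx'
  obtain ⟨⟨w, hw⟩, hne⟩ := hx'
  refine ⟨⟨q w + b x' w, by rw [← hw, q_add hqb]; ring⟩, ?_⟩
  -- decompose x' along the two supports
  set y' := bV.repr.symm ((bV.repr x').filter (fun k => k ∈ Sy)) with hy'def
  set z' := bV.repr.symm ((bV.repr x').filter (fun k => ¬ k ∈ Sy)) with hz'def
  have hsplit : y' + z' = x' := by
    rw [hy'def, hz'def, ← map_add, Finsupp.filter_pos_add_filter_neg (bV.repr x') _,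
      LinearEquiv.symm_apply_apply]
  have hfy : (bV.repr (y + z)).filter (fun k => k ∈ Sy) = bV.repr y := by
    ext k
    rw [Finsupp.filter_apply]
    split_ifs with hk
    · rw [map_add, Finsupp.add_apply]
      have hz0 : bV.repr z k = 0 := by
        rcases hdisj k with h | h
        · exact absurd (Finsupp.mem_support_iff.mp hk) (not_not.mpr h)
        · exact h
      rw [hz0, add_zero]
    · exact (Finsupp.notMem_support_iff.mp hk).symm
  have hfz : (bV.repr (y + z)).filter (fun k => ¬ k ∈ Sy) = bV.repr z := by
    ext k
    rw [Finsupp.filter_apply]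
    split_ifs with hk
    · rcases hdisj k with h | h
      · exact absurd (Finsupp.mem_support_iff.mp hk) (not_not.mpr h)
      · exact h.symm
    · rw [map_add, Finsupp.add_apply, Finsupp.notMem_support_iff.mp hk, zero_add]
  have hy'le : mle y' y := by
    refine ⟨bV.repr.symm ((bV.repr w).filter (fun k => k ∈ Sy)), ?_⟩
    rw [hy'def, ← map_add, ← Finsupp.filter_add]
    have h3 : bV.repr x' + bV.repr w = bV.repr (y + z) := by
      rw [← map_add, hw, hx_add]
    rw [h3, hfy, LinearEquiv.symm_apply_apply]
  have hz'le : mle z' z := by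
    refine ⟨bV.repr.symm ((bV.repr w).filter (fun k => ¬ k ∈ Sy)), ?_⟩
    rw [hz'def, ← map_add, ← Finsupp.filter_add]
    have h3 : bV.repr x' + bV.repr w = bV.repr (y + z) := by
      rw [← map_add, hw, hx_add]
    rw [h3, hfz, LinearEquiv.symm_apply_apply]
  have hnotboth : ¬ (y' = y ∧ z' = z) := by
    rintro ⟨h1, h2⟩
    apply hne
    rw [← hsplit, h1, h2, hx_add]
  have hqx' : q x' = q y' + q z' + b y' z' := by rw [← hsplit, q_add hqb]
  rw [hqx]
  by_cases hyy : y' = y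
  · have hzz : z' ≠ z := fun h => hnotboth ⟨hyy, h⟩
    have hPz' := hPz z' ⟨hz'le, hzz⟩
    have h1 : glt (eps R * q z') (eps R * q y) := by rw [hqq]; exact hPz'
    have h2 : glt (eps R * b y z') (eps R * q y) :=
      gle_glt_trans (mle_gle hR (mle_b hqb (mle_refl y) hz'le)) hb
    have hval : q x' = q y := by
      rw [hqx', hyy, absorb hR h1, absorb hR h2]
    rw [hval]
    intro h
    exact hyq (by rw [h]; exact eps_mul_mem_eSet (q y))
  · have hPy' := hPy y' ⟨hy'le, hyy⟩
    by_cases hzz : z' = z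
    · have h1 : glt (eps R * q y') (eps R * q z) := by rw [← hqq]; exact hPy'
      have h2 : glt (eps R * b y' z) (eps R * q z) := by
        rw [← hqq]
        exact gle_glt_trans (mle_gle hR (mle_b hqb hy'le (mle_refl z))) hb
      have hval : q x' = q z := by
        rw [hqx', hzz, add_comm (q y') (q z), absorb hR h1, absorb hR h2]
      rw [hval]
      intro h
      exact hzq (by rw [h, hqq]; exact eps_mul_mem_eSet (q z))
    · have hPz' := hPz z' ⟨hz'le, hzz⟩
      have t1 : glt (eps R * q y') (eps R * q y) := hPy'
      have t2 : glt (eps R * q z') (eps R * q y) := by rw [hqq]; exact hPz'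
      have t3 : glt (eps R * b y' z') (eps R * q y) :=
        gle_glt_trans (mle_gle hR (mle_b hqb hy'le hz'le)) hb
      have hlt : glt (eps R * q x') (eps R * q y) := by
        rw [hqx', mul_add, mul_add]
        refine glt_add hR ?_ (eps_mul_mem_eSet _)
          (glt_add hR (eps_mul_mem_eSet _) (eps_mul_mem_eSet _) t1 t2) t3
        rw [← mul_add]
        exact eps_mul_mem_eSet _
      intro h
      apply hlt.2
      rw [h, eps_mul_idem hR]

end Supertrop
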